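/- arXiv:1809.03493 — 4 statements merged into one kernel-verified Lean document; each statement's English description precedes it below -/
import Mathlib

section
/- Let L be a ladder-like graph on 2m vertices with m ≥ 6. Then the graph G = L − {u_1 v_1, u_4 v_4} is 4-pancyclic, i.e., it contains a cycle of every length ℓ with 4 ≤ ℓ ≤ 2m. -/
open SimpleGraph

/-- `IsKRegular G k`: every vertex has exactly `k` neighbours. -/
def IsKRegular {V : Type*} (G : SimpleGraph V) (k : ℕ) : Prop :=
  ∀ v : V, (G.neighborSet v).ncard = k

/-- `IsKConnected G k`: `G` has more than `k` vertices and removing any set of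
fewer than `k` vertices leaves a connected graph. -/
def IsKConnected {V : Type*} (G : SimpleGraph V) (k : ℕ) : Prop :=
  k < Nat.card V ∧ ∀ S : Set V, S.ncard < k → (G.induce (Sᶜ : Set V)).Connected

/-- `G` contains a cycle of length `ℓ`. -/
def HasCycleOfLength {V : Type*} (G : SimpleGraph V) (ℓ : ℕ) : Prop :=
  ∃ (v : V) (c : G.Walk v v), c.IsCycle ∧ c.length = ℓ

/-- The ladder-like graph on `2m` vertices: two disjoint `m`-cycles
`u_1,...,u_m` (side `false`) and `v_1,...,v_m` (side `true`), the matching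
edges `u_i v_i`, and the two extra edges `u_1 v_4` and `u_4 v_1`.
Vertex `(false, i)` is `u_{i+1}` and `(true, i)` is `v_{i+1}`. -/
def ladderLike (m : ℕ) [NeZero m] : SimpleGraph (Bool × Fin m) where
  Adj p q :=
    (p.1 = q.1 ∧ p.2 ≠ q.2 ∧ (q.2 = p.2 + 1 ∨ p.2 = q.2 + 1)) ∨
    (p.1 ≠ q.1 ∧ (p.2 = q.2 ∨ (p.2 = 0 ∧ q.2 = 3) ∨ (p.2 = 3 ∧ q.2 = 0)))
  symm := by
    constructor
    rintro ⟨a, i⟩ ⟨b, j⟩ (⟨h1, h2, h3⟩ | ⟨h1, h2⟩)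
    · exact Or.inl ⟨h1.symm, h2.symm, h3.symm⟩
    · refine Or.inr ⟨Ne.symm h1, ?_⟩
      rcases h2 with h | ⟨h, h'⟩ | ⟨h, h'⟩
      · exact Or.inl h.symm
      · exact Or.inr (Or.inr ⟨h', h⟩)
      · exact Or.inr (Or.inl ⟨h', h⟩)
  loopless := by
    constructor
    rintro ⟨a, i⟩ (⟨-, h, -⟩ | ⟨h, -⟩) <;> exact h rfl

/-- The ladder-like graph with the edges `u_1 v_1` and `u_4 v_4` deleted. -/
def ladderLikeMinus (m : ℕ) [NeZero m] : SimpleGraph (Bool × Fin m) :=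
  (ladderLike m).deleteEdges
    {s((false, (0 : Fin m)), (true, (0 : Fin m))), s((false, (3 : Fin m)), (true, (3 : Fin m)))}

section Aux
variable {m : ℕ} [NeZero m]
open Fin.NatCast

lemma fin_cast_inj {x y : ℕ} (hx : x < m) (hy : y < m) : ((x : Fin m) = (y : Fin m)) ↔ x = y := by
  constructor
  · intro h
    have := congrArg Fin.val h
    simpa [Fin.val_natCast, Nat.mod_eq_of_lt hx, Nat.mod_eq_of_lt hy] using this
  · rintro rfl; rfl

lemma adj_step (hm : 6 ≤ m) (b : Bool) (x : ℕ) (h1 : x + 1 < m) :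
    (ladderLikeMinus m).Adj (b, (x : Fin m)) (b, ((x+1 : ℕ) : Fin m)) := by
  rw [ladderLikeMinus, SimpleGraph.deleteEdges_adj]
  constructor
  · refine Or.inl ⟨rfl, ?_, Or.inl ?_⟩
    · simp only [ne_eq, fin_cast_inj (by omega : x < m) h1]
      omega
    · push_cast
      ring
  · simp only [Set.mem_insert_iff, Set.mem_singleton_iff, Sym2.eq_iff, Prod.mk.injEq, not_or]
    cases b <;> simp

lemma adj_wrap (hm : 6 ≤ m) (b : Bool) :
    (ladderLikeMinus m).Adj (b, ((m-1 : ℕ) : Fin m)) (b, ((0 : ℕ) : Fin m)) := by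
  rw [ladderLikeMinus, SimpleGraph.deleteEdges_adj]
  constructor
  · refine Or.inl ⟨rfl, ?_, Or.inl ?_⟩
    · simp only [ne_eq, fin_cast_inj (by omega : m - 1 < m) (by omega : 0 < m)]
      omega
    · push_cast
      have : ((m - 1 : ℕ) : Fin m) + 1 = ((m - 1 + 1 : ℕ) : Fin m) := by push_cast; ring
      rw [this, show m - 1 + 1 = m by omega]
      simp [Fin.natCast_self]
  · simp only [Set.mem_insert_iff, Set.mem_singleton_iff, Sym2.eq_iff, Prod.mk.injEq, not_or]
    cases b <;> simp

lemma adj_rung (hm : 6 ≤ m) (x : ℕ) (h : x < m) (h0 : x ≠ 0) (h3 : x ≠ 3) :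
    (ladderLikeMinus m).Adj (false, (x : Fin m)) (true, (x : Fin m)) := by
  rw [ladderLikeMinus, SimpleGraph.deleteEdges_adj]
  constructor
  · exact Or.inr ⟨by simp, Or.inl rfl⟩
  · simp only [Set.mem_insert_iff, Set.mem_singleton_iff, Sym2.eq_iff, Prod.mk.injEq, not_or]
    have e0 : ((x : Fin m) = (0 : Fin m)) ↔ x = 0 := by
      rw [show (0 : Fin m) = ((0 : ℕ) : Fin m) by simp]
      exact fin_cast_inj h (by omega)
    have e3 : ((x : Fin m) = (3 : Fin m)) ↔ x = 3 := by
      rw [show (3 : Fin m) = ((3 : ℕ) : Fin m) by simp]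
      exact fin_cast_inj h (by omega)
    simp [e0, e3, h0, h3]

lemma adj_cross1 (hm : 6 ≤ m) :
    (ladderLikeMinus m).Adj (false, ((0 : ℕ) : Fin m)) (true, ((3 : ℕ) : Fin m)) := by
  rw [ladderLikeMinus, SimpleGraph.deleteEdges_adj]
  constructor
  · refine Or.inr ⟨by simp, Or.inr (Or.inl ⟨by simp, by simp⟩)⟩
  · simp only [Set.mem_insert_iff, Set.mem_singleton_iff, Sym2.eq_iff, Prod.mk.injEq, not_or]
    have e30 : ((3 : ℕ) : Fin m) ≠ (0 : Fin m) := by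
      rw [show (0 : Fin m) = ((0 : ℕ) : Fin m) by simp]
      rw [ne_eq, fin_cast_inj (by omega) (by omega)]
      omega
    have e03 : ((0 : ℕ) : Fin m) ≠ (3 : Fin m) := by
      rw [show (3 : Fin m) = ((3 : ℕ) : Fin m) by simp]
      rw [ne_eq, fin_cast_inj (by omega) (by omega)]
      omega
    have l30 : (3 : Fin m) ≠ (0 : Fin m) := by
      rw [show (3 : Fin m) = ((3 : ℕ) : Fin m) by simp,
        show (0 : Fin m) = ((0 : ℕ) : Fin m) by simp, ne_eq,
        fin_cast_inj (by omega) (by omega)]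
      omega
    have l03 : (0 : Fin m) ≠ (3 : Fin m) := fun h => l30 h.symm
    simp [e30, e03, l30, l03]

lemma adj_cross2 (hm : 6 ≤ m) :
    (ladderLikeMinus m).Adj (false, ((3 : ℕ) : Fin m)) (true, ((0 : ℕ) : Fin m)) := by
  rw [ladderLikeMinus, SimpleGraph.deleteEdges_adj]
  constructor
  · refine Or.inr ⟨by simp, Or.inr (Or.inr ⟨by simp, by simp⟩)⟩
  · simp only [Set.mem_insert_iff, Set.mem_singleton_iff, Sym2.eq_iff, Prod.mk.injEq, not_or]
    have e30 : ((3 : ℕ) : Fin m) ≠ (0 : Fin m) := by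
      rw [show (0 : Fin m) = ((0 : ℕ) : Fin m) by simp]
      rw [ne_eq, fin_cast_inj (by omega) (by omega)]
      omega
    have e03 : ((0 : ℕ) : Fin m) ≠ (3 : Fin m) := by
      rw [show (3 : Fin m) = ((3 : ℕ) : Fin m) by simp]
      rw [ne_eq, fin_cast_inj (by omega) (by omega)]
      omega
    have l30 : (3 : Fin m) ≠ (0 : Fin m) := by
      rw [show (3 : Fin m) = ((3 : ℕ) : Fin m) by simp,
        show (0 : Fin m) = ((0 : ℕ) : Fin m) by simp, ne_eq,
        fin_cast_inj (by omega) (by omega)]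
      omega
    have l03 : (0 : Fin m) ≠ (3 : Fin m) := fun h => l30 h.symm
    simp [e30, e03, l30, l03]



variable {V : Type*} {G : SimpleGraph V}

/-- Build a walk from a chain of adjacencies. -/
def Walk.ofChain (G : SimpleGraph V) : ∀ (a b : V) (l : List V),
    List.Chain G.Adj a (l ++ [b]) → G.Walk a b
  | a, b, [], h => SimpleGraph.Walk.cons (List.chain_cons.mp h).1 SimpleGraph.Walk.nil
  | a, b, c :: l, h =>
    SimpleGraph.Walk.cons ((List.chain_cons.mp h).1)
      (Walk.ofChain G c b l ((List.chain_cons.mp h).2))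

lemma Walk.ofChain_support (a b : V) (l : List V) (h : List.Chain G.Adj a (l ++ [b])) :
    (Walk.ofChain G a b l h).support = a :: (l ++ [b]) := by
  induction l generalizing a with
  | nil => simp [Walk.ofChain]
  | cons c l ih => simp [Walk.ofChain]; exact ih _ _

lemma Walk.ofChain_length (a b : V) (l : List V) (h : List.Chain G.Adj a (l ++ [b])) :
    (Walk.ofChain G a b l h).length = l.length + 1 := by
  induction l generalizing a with
  | nil => simp [Walk.ofChain]
  | cons c l ih => simp [Walk.ofChain]; exact ih _ _


lemma edge_not_mem {u v : V} {p : G.Walk v u} (hp : p.IsPath) (hl : 2 ≤ p.length) :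
    s(u, v) ∉ p.edges := by
  intro hmem
  cases p with
  | nil => simp at hl
  | @cons _ w _ h' q =>
    rw [SimpleGraph.Walk.edges_cons, List.mem_cons] at hmem
    rw [SimpleGraph.Walk.cons_isPath_iff] at hp
    rcases hmem with hmem | hmem
    · rw [Sym2.eq_iff] at hmem
      have hw : w = u := by
        rcases hmem with ⟨h1, h2⟩ | ⟨h1, h2⟩
        · exact h2.symm.trans h1.symm
        · exact h1.symm
      subst hw
      cases q with
      | nil => simp [SimpleGraph.Walk.length_cons] at hl
      | cons h'' r =>
        rw [SimpleGraph.Walk.cons_isPath_iff] at hp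
        exact hp.1.2 (SimpleGraph.Walk.end_mem_support r)
    · exact hp.2 (SimpleGraph.Walk.snd_mem_support_of_mem_edges q hmem)

lemma hasCycle_of_chain (a c : V) (l : List V)
    (h : List.Chain G.Adj a ((c :: l) ++ [a]))
    (hn : (a :: c :: l).Nodup) (hl : 1 ≤ l.length) :
    HasCycleOfLength G (l.length + 2) := by
  obtain ⟨h1, h2⟩ := List.chain_cons.mp h
  set p : G.Walk c a := Walk.ofChain G c a l h2 with hp
  have hplen : p.length = l.length + 1 := Walk.ofChain_length c a l h2
  have hpsupp : p.support = c :: (l ++ [a]) := Walk.ofChain_support c a l h2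
  have hpath : p.IsPath := by
    rw [SimpleGraph.Walk.isPath_def, hpsupp]
    have hperm : ((c :: l) ++ [a]).Perm (a :: c :: l) := List.perm_append_singleton a (c :: l)
    simpa using hperm.nodup_iff.mpr hn
  have hedge : s(a, c) ∉ p.edges := edge_not_mem hpath (by omega)
  refine ⟨a, SimpleGraph.Walk.cons h1 p, ?_, ?_⟩
  · exact (SimpleGraph.Walk.cons_isCycle_iff p h1).mpr ⟨hpath, hedge⟩
  · simp [SimpleGraph.Walk.length_cons, hplen]

lemma chain_shift {R : V → V → Prop} (f : ℕ → V) (c : V) : ∀ (k s : ℕ),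
    (∀ i, s ≤ i → i < s + k → R (f i) (f (i+1))) → R (f (s + k)) c →
    List.Chain R (f s) (((List.range k).map fun i => f (s+1+i)) ++ [c])
  | 0, s, _, hc => by simpa using List.Chain.cons hc List.Chain.nil
  | (k+1), s, h, hc => by
    rw [List.range_succ_eq_map, List.map_cons, List.map_map]
    refine List.chain_cons.mpr ⟨by simpa using h s le_rfl (by omega), ?_⟩
    have heq : ((List.range k).map ((fun i => f (s+1+i)) ∘ Nat.succ)) =
        ((List.range k).map fun i => f ((s+1)+1+i)) := by
      refine List.map_congr_left fun i _ => ?_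
      simp only [Function.comp]
      congr 1
      omega
    rw [heq]
    have hrec := chain_shift f c k (s+1) (fun i hi hi' => h i (by omega) (by omega))
      (by have he : s + 1 + k = s + (k+1) := by omega
          rw [he]; exact hc)
    simpa [List.Chain] using hrec

lemma map_range_eq (f : ℕ → V) (n : ℕ) (hn : 3 ≤ n) :
    (List.range n).map f = f 0 :: f 1 :: ((List.range (n-2)).map fun i => f (2+i)) := by
  obtain ⟨k, rfl⟩ : ∃ k, n = k + 2 := ⟨n - 2, by omega⟩
  simp only [List.range_succ_eq_map, List.map_cons, List.map_map, Nat.add_sub_cancel]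
  congr 2
  refine List.map_congr_left fun i _ => ?_
  simp only [Function.comp]
  congr 1
  omega

lemma hasCycle_of_fn (f : ℕ → V) (n : ℕ) (hn : 3 ≤ n)
    (hadj : ∀ i, i + 1 < n → G.Adj (f i) (f (i+1)))
    (hcl : G.Adj (f (n-1)) (f 0))
    (hinj : ∀ i j, i < n → j < n → f i = f j → i = j) :
    HasCycleOfLength G n := by
  have hchain : List.Chain G.Adj (f 0)
      (((List.range (n-1)).map fun i => f (0+1+i)) ++ [f 0]) :=
    chain_shift f (f 0) (n-1) 0 (fun i _ hi => hadj i (by omega)) (by simpa using hcl)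
  have hlist : ((List.range (n-1)).map fun i => f (0+1+i)) =
      f 1 :: ((List.range (n-2)).map fun i => f (2+i)) := by
    obtain ⟨k, hk⟩ : ∃ k, n - 1 = k + 1 := ⟨n - 2, by omega⟩
    rw [hk, List.range_succ_eq_map, List.map_cons, List.map_map,
      show n - 2 = k by omega]
    congr 1
    refine List.map_congr_left fun i _ => ?_
    simp only [Function.comp]
    congr 1
    omega
  rw [hlist] at hchain
  have hnd : (f 0 :: f 1 :: ((List.range (n-2)).map fun i => f (2+i))).Nodup := by
    rw [← map_range_eq f n hn]
    refine List.Nodup.map_on ?_ List.nodup_range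
    intro x hx y hy hxy
    exact hinj x y (List.mem_range.mp hx) (List.mem_range.mp hy) hxy
  have := hasCycle_of_chain (f 0) (f 1) ((List.range (n-2)).map fun i => f (2+i))
    hchain hnd (by rw [List.length_map, List.length_range]; omega)
  simpa [List.length_map, List.length_range, show n - 2 + 2 = n by omega] using this

lemma familyA {m : ℕ} [NeZero m] (hm : 6 ≤ m) (p d : ℕ) (hp0 : p ≠ 0) (hp3 : p ≠ 3)
    (hq3 : p + d ≠ 3) (hd : 1 ≤ d) (hq : p + d < m) :
    HasCycleOfLength (ladderLikeMinus m) (2*d + 2) := by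
  apply hasCycle_of_fn (f := fun i => if i ≤ d then ((false, ((p + i : ℕ) : Fin m)) : Bool × Fin m)
    else (true, ((p + 2*d + 1 - i : ℕ) : Fin m))) (n := 2*d+2) (by omega)
  · intro i hi
    rcases lt_trichotomy i d with h | rfl | h
    · simp only [if_pos h.le, if_pos (by omega : i + 1 ≤ d)]
      rw [show p + (i+1) = (p + i) + 1 by omega]
      exact adj_step hm false (p+i) (by omega)
    · simp only [le_refl, if_pos, if_neg (by omega : ¬ i + 1 ≤ i),
        show p + 2*i + 1 - (i+1) = p + i by omega]
      exact adj_rung hm (p+i) (by omega) (by omega) hq3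
    · simp only [if_neg (by omega : ¬ i ≤ d), if_neg (by omega : ¬ i + 1 ≤ d)]
      rw [show p + 2*d + 1 - i = (p + 2*d + 1 - (i+1)) + 1 by omega]
      exact (adj_step hm true (p + 2*d + 1 - (i+1)) (by omega)).symm
  · rw [show 2*d+2-1 = 2*d+1 by omega]
    simp only [if_neg (by omega : ¬ 2*d+1 ≤ d), if_pos (by omega : 0 ≤ d),
      show p + 2*d + 1 - (2*d+1) = p by omega, Nat.add_zero]
    exact (adj_rung hm p (by omega) hp0 hp3).symm
  · intro i j hi hj hij
    split_ifs at hij <;>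
      simp only [Prod.mk.injEq, Bool.false_eq_true, Bool.true_eq_false, false_and,
        eq_self_iff_true, true_and] at hij <;>
      first
        | omega
        | (rw [fin_cast_inj (by omega) (by omega)] at hij; omega)

lemma family5 {m : ℕ} [NeZero m] (hm : 6 ≤ m) :
    HasCycleOfLength (ladderLikeMinus m) 5 := by
  apply hasCycle_of_fn (f := fun i => if i = 0 then ((false, ((0:ℕ) : Fin m)) : Bool × Fin m)
    else if i ≤ 3 then (true, ((4 - i : ℕ) : Fin m)) else (false, ((1:ℕ) : Fin m)))
    (n := 5) (by omega)
  · intro i hi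
    have hi' : i < 4 := by omega
    interval_cases i
    · simp only [if_pos rfl, if_neg (by omega : ¬ (1:ℕ) = 0), if_pos (by omega : (1:ℕ) ≤ 3)]
      rw [show 4 - 1 = 3 by omega]
      exact adj_cross1 hm
    · simp only [if_neg (by omega : ¬ (1:ℕ) = 0), if_pos (by omega : (1:ℕ) ≤ 3),
        if_neg (by omega : ¬ (2:ℕ) = 0), if_pos (by omega : (2:ℕ) ≤ 3)]
      rw [show 4 - 1 = 2 + 1 by omega, show 4 - 2 = 2 by omega]
      exact (adj_step hm true 2 (by omega)).symm
    · simp only [if_neg (by omega : ¬ (2:ℕ) = 0), if_pos (by omega : (2:ℕ) ≤ 3),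
        if_neg (by omega : ¬ (3:ℕ) = 0), if_pos (by omega : (3:ℕ) ≤ 3)]
      rw [show 4 - 2 = 1 + 1 by omega, show 4 - 3 = 1 by omega]
      exact (adj_step hm true 1 (by omega)).symm
    · simp only [if_neg (by omega : ¬ (3:ℕ) = 0), if_pos (by omega : (3:ℕ) ≤ 3),
        if_neg (by omega : ¬ (4:ℕ) = 0), if_neg (by omega : ¬ (4:ℕ) ≤ 3)]
      rw [show 4 - 3 = 1 by omega]
      exact (adj_rung hm 1 (by omega) (by omega) (by omega)).symm
  · simp only [show (5:ℕ) - 1 = 4 by omega, if_neg (by omega : ¬ (4:ℕ) = 0),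
      if_neg (by omega : ¬ (4:ℕ) ≤ 3), if_pos rfl]
    rw [show (1:ℕ) = 0 + 1 by omega]
    exact (adj_step hm false 0 (by omega)).symm
  · intro i j hi hj hij
    split_ifs at hij <;>
      simp only [Prod.mk.injEq, Bool.false_eq_true, Bool.true_eq_false, false_and,
        eq_self_iff_true, true_and] at hij <;>
      first
        | omega
        | (rw [fin_cast_inj (by omega) (by omega)] at hij; omega)

lemma familyB {m : ℕ} [NeZero m] (hm : 6 ≤ m) (k : ℕ) (hk4 : 4 ≤ k) (hkm : k ≤ m - 1) :
    HasCycleOfLength (ladderLikeMinus m) (2*k - 1) := by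
  apply hasCycle_of_fn (f := fun i => if i = 0 then ((false, ((0:ℕ) : Fin m)) : Bool × Fin m)
    else if i ≤ k - 2 then (true, ((i + 2 : ℕ) : Fin m)) else (false, ((2*k - 1 - i : ℕ) : Fin m)))
    (n := 2*k - 1) (by omega)
  · intro i hi
    rcases Nat.eq_or_lt_of_le (Nat.zero_le i) with h0 | h0
    · rw [← h0]
      simp only [if_pos rfl, if_neg (by omega : ¬ (1:ℕ) = 0), if_pos (by omega : (1:ℕ) ≤ k - 2)]
      rw [show 1 + 2 = 3 by omega]
      exact adj_cross1 hm
    rcases lt_trichotomy i (k - 2) with h | h | h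
    · simp only [if_neg (by omega : ¬ i = 0), if_pos (by omega : i ≤ k - 2),
        if_neg (by omega : ¬ i + 1 = 0), if_pos (by omega : i + 1 ≤ k - 2)]
      rw [show i + 1 + 2 = (i + 2) + 1 by omega]
      exact adj_step hm true (i + 2) (by omega)
    · simp only [if_neg (by omega : ¬ i = 0), if_pos (by omega : i ≤ k - 2),
        if_neg (by omega : ¬ i + 1 = 0), if_neg (by omega : ¬ i + 1 ≤ k - 2)]
      rw [show i + 2 = k by omega, show 2*k - 1 - (i + 1) = k by omega]
      exact (adj_rung hm k (by omega) (by omega) (by omega)).symm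
    · simp only [if_neg (by omega : ¬ i = 0), if_neg (by omega : ¬ i ≤ k - 2),
        if_neg (by omega : ¬ i + 1 = 0), if_neg (by omega : ¬ i + 1 ≤ k - 2)]
      rw [show 2*k - 1 - i = (2*k - 1 - (i+1)) + 1 by omega]
      exact (adj_step hm false (2*k - 1 - (i+1)) (by omega)).symm
  · rw [show 2*k - 1 - 1 = 2*k - 2 by omega]
    simp only [if_neg (by omega : ¬ 2*k - 2 = 0), if_neg (by omega : ¬ 2*k - 2 ≤ k - 2),
      if_pos rfl]
    rw [show 2*k - 1 - (2*k - 2) = 0 + 1 by omega]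
    exact (adj_step hm false 0 (by omega)).symm
  · intro i j hi hj hij
    split_ifs at hij <;>
      simp only [Prod.mk.injEq, Bool.false_eq_true, Bool.true_eq_false, false_and,
        eq_self_iff_true, true_and] at hij <;>
      first
        | omega
        | (rw [fin_cast_inj (by omega) (by omega)] at hij; omega)

lemma familyC {m : ℕ} [NeZero m] (hm : 6 ≤ m) :
    HasCycleOfLength (ladderLikeMinus m) (2*m - 1) := by
  apply hasCycle_of_fn (f := fun i => if i = 0 then ((false, ((0:ℕ) : Fin m)) : Bool × Fin m)
    else if i ≤ m - 3 then (true, ((i + 2 : ℕ) : Fin m))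
    else if i ≤ m then (true, ((i + 2 - m : ℕ) : Fin m)) else (false, ((i - m + 1 : ℕ) : Fin m)))
    (n := 2*m - 1) (by omega)
  · intro i hi
    rcases Nat.eq_or_lt_of_le (Nat.zero_le i) with h0 | h0
    · rw [← h0]
      simp only [if_pos rfl, if_neg (by omega : ¬ (1:ℕ) = 0), if_pos (by omega : (1:ℕ) ≤ m - 3)]
      rw [show 1 + 2 = 3 by omega]
      exact adj_cross1 hm
    rcases lt_trichotomy i (m - 3) with h | h | h
    · simp only [if_neg (by omega : ¬ i = 0), if_pos (by omega : i ≤ m - 3),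
        if_neg (by omega : ¬ i + 1 = 0), if_pos (by omega : i + 1 ≤ m - 3)]
      rw [show i + 1 + 2 = (i + 2) + 1 by omega]
      exact adj_step hm true (i + 2) (by omega)
    · simp only [if_neg (by omega : ¬ i = 0), if_pos (by omega : i ≤ m - 3),
        if_neg (by omega : ¬ i + 1 = 0), if_neg (by omega : ¬ i + 1 ≤ m - 3),
        if_pos (by omega : i + 1 ≤ m)]
      rw [show i + 2 = m - 1 by omega, show i + 1 + 2 - m = 0 by omega]
      exact adj_wrap hm true
    rcases lt_trichotomy i m with h' | h' | h'
    · simp only [if_neg (by omega : ¬ i = 0), if_neg (by omega : ¬ i ≤ m - 3),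
        if_pos (by omega : i ≤ m), if_neg (by omega : ¬ i + 1 = 0),
        if_neg (by omega : ¬ i + 1 ≤ m - 3), if_pos (by omega : i + 1 ≤ m)]
      rw [show i + 1 + 2 - m = (i + 2 - m) + 1 by omega]
      exact adj_step hm true (i + 2 - m) (by omega)
    · simp only [if_neg (by omega : ¬ i = 0), if_neg (by omega : ¬ i ≤ m - 3),
        if_pos (by omega : i ≤ m), if_neg (by omega : ¬ i + 1 = 0),
        if_neg (by omega : ¬ i + 1 ≤ m - 3), if_neg (by omega : ¬ i + 1 ≤ m)]
      rw [show i + 2 - m = 2 by omega, show i + 1 - m + 1 = 2 by omega]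
      exact (adj_rung hm 2 (by omega) (by omega) (by omega)).symm
    · simp only [if_neg (by omega : ¬ i = 0), if_neg (by omega : ¬ i ≤ m - 3),
        if_neg (by omega : ¬ i ≤ m), if_neg (by omega : ¬ i + 1 = 0),
        if_neg (by omega : ¬ i + 1 ≤ m - 3), if_neg (by omega : ¬ i + 1 ≤ m)]
      rw [show i + 1 - m + 1 = (i - m + 1) + 1 by omega]
      exact adj_step hm false (i - m + 1) (by omega)
  · rw [show 2*m - 1 - 1 = 2*m - 2 by omega]
    simp only [if_neg (by omega : ¬ 2*m - 2 = 0), if_neg (by omega : ¬ 2*m - 2 ≤ m - 3),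
      if_neg (by omega : ¬ 2*m - 2 ≤ m), if_pos rfl]
    rw [show 2*m - 2 - m + 1 = m - 1 by omega]
    exact adj_wrap hm false
  · intro i j hi hj hij
    split_ifs at hij <;>
      simp only [Prod.mk.injEq, Bool.false_eq_true, Bool.true_eq_false, false_and,
        eq_self_iff_true, true_and] at hij <;>
      first
        | omega
        | (rw [fin_cast_inj (by omega) (by omega)] at hij; omega)

lemma familyD {m : ℕ} [NeZero m] (hm : 6 ≤ m) :
    HasCycleOfLength (ladderLikeMinus m) (2*m) := by
  apply hasCycle_of_fn (f := fun i => if i = 0 then ((false, ((0:ℕ) : Fin m)) : Bool × Fin m)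
    else if i = 1 then (false, ((1:ℕ) : Fin m))
    else if i = 2 then (true, ((1:ℕ) : Fin m))
    else if i = 3 then (true, ((0:ℕ) : Fin m))
    else if i ≤ m + 1 then (true, ((m + 3 - i : ℕ) : Fin m)) else (false, ((i - m : ℕ) : Fin m)))
    (n := 2*m) (by omega)
  · intro i hi
    rcases (by omega : i = 0 ∨ i = 1 ∨ i = 2 ∨ i = 3 ∨ (4 ≤ i ∧ i < m + 1) ∨ i = m + 1 ∨ m + 2 ≤ i)
      with h | h | h | h | ⟨h4, h5⟩ | h | h
    · subst h
      simp only [if_pos rfl, if_neg (by omega : ¬ (1:ℕ) = 0), if_pos rfl]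
      rw [show (1:ℕ) = 0 + 1 by omega]
      exact adj_step hm false 0 (by omega)
    · subst h
      simp only [if_neg (by omega : ¬ (1:ℕ) = 0), if_pos rfl,
        if_neg (by omega : ¬ (1:ℕ)+1 = 0), if_neg (by omega : ¬ (1:ℕ)+1 = 1),
        if_pos (by omega : (1:ℕ)+1 = 2)]
      exact adj_rung hm 1 (by omega) (by omega) (by omega)
    · subst h
      simp only [if_neg (by omega : ¬ (2:ℕ) = 0), if_neg (by omega : ¬ (2:ℕ) = 1),
        if_pos rfl, if_neg (by omega : ¬ (2:ℕ)+1 = 0), if_neg (by omega : ¬ (2:ℕ)+1 = 1),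
        if_neg (by omega : ¬ (2:ℕ)+1 = 2), if_pos (by omega : (2:ℕ)+1 = 3)]
      rw [show (1:ℕ) = 0 + 1 by omega]
      exact (adj_step hm true 0 (by omega)).symm
    · subst h
      simp only [if_neg (by omega : ¬ (3:ℕ) = 0), if_neg (by omega : ¬ (3:ℕ) = 1),
        if_neg (by omega : ¬ (3:ℕ) = 2), if_pos rfl, if_neg (by omega : ¬ (3:ℕ)+1 = 0),
        if_neg (by omega : ¬ (3:ℕ)+1 = 1), if_neg (by omega : ¬ (3:ℕ)+1 = 2),
        if_neg (by omega : ¬ (3:ℕ)+1 = 3), if_pos (by omega : (3:ℕ)+1 ≤ m + 1)]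
      rw [show m + 3 - (3+1) = m - 1 by omega]
      exact (adj_wrap hm true).symm
    · simp only [if_neg (by omega : ¬ i = 0), if_neg (by omega : ¬ i = 1),
        if_neg (by omega : ¬ i = 2), if_neg (by omega : ¬ i = 3),
        if_pos (by omega : i ≤ m + 1), if_neg (by omega : ¬ i + 1 = 0),
        if_neg (by omega : ¬ i + 1 = 1), if_neg (by omega : ¬ i + 1 = 2),
        if_neg (by omega : ¬ i + 1 = 3), if_pos (by omega : i + 1 ≤ m + 1)]
      rw [show m + 3 - i = (m + 3 - (i + 1)) + 1 by omega]
      exact (adj_step hm true (m + 3 - (i + 1)) (by omega)).symm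
    · subst h
      simp only [if_neg (by omega : ¬ m + 1 = 0), if_neg (by omega : ¬ m + 1 = 1),
        if_neg (by omega : ¬ m + 1 = 2), if_neg (by omega : ¬ m + 1 = 3),
        if_pos (by omega : m + 1 ≤ m + 1), if_neg (by omega : ¬ m + 1 + 1 = 0),
        if_neg (by omega : ¬ m + 1 + 1 = 1), if_neg (by omega : ¬ m + 1 + 1 = 2),
        if_neg (by omega : ¬ m + 1 + 1 = 3), if_neg (by omega : ¬ m + 1 + 1 ≤ m + 1)]
      rw [show m + 3 - (m + 1) = 2 by omega, show m + 1 + 1 - m = 2 by omega]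
      exact (adj_rung hm 2 (by omega) (by omega) (by omega)).symm
    · simp only [if_neg (by omega : ¬ i = 0), if_neg (by omega : ¬ i = 1),
        if_neg (by omega : ¬ i = 2), if_neg (by omega : ¬ i = 3),
        if_neg (by omega : ¬ i ≤ m + 1), if_neg (by omega : ¬ i + 1 = 0),
        if_neg (by omega : ¬ i + 1 = 1), if_neg (by omega : ¬ i + 1 = 2),
        if_neg (by omega : ¬ i + 1 = 3), if_neg (by omega : ¬ i + 1 ≤ m + 1)]
      rw [show i + 1 - m = (i - m) + 1 by omega]
      exact adj_step hm false (i - m) (by omega)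
  · simp only [if_neg (by omega : ¬ 2*m - 1 = 0), if_neg (by omega : ¬ 2*m - 1 = 1),
      if_neg (by omega : ¬ 2*m - 1 = 2), if_neg (by omega : ¬ 2*m - 1 = 3),
      if_neg (by omega : ¬ 2*m - 1 ≤ m + 1), if_pos rfl]
    rw [show 2*m - 1 - m = m - 1 by omega]
    exact adj_wrap hm false
  · intro i j hi hj hij
    split_ifs at hij <;>
      simp only [Prod.mk.injEq, Bool.false_eq_true, Bool.true_eq_false, false_and,
        eq_self_iff_true, true_and] at hij <;>
      first
        | omega
        | (rw [fin_cast_inj (by omega) (by omega)] at hij; omega)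


end Aux

theorem ladderLikeMinus_pancyclic (m : ℕ) [NeZero m] (hm : 6 ≤ m) :
    ∀ ℓ : ℕ, 4 ≤ ℓ → ℓ ≤ 2 * m → HasCycleOfLength (ladderLikeMinus m) ℓ := by
  intro ℓ h4 hub
  rcases Nat.even_or_odd ℓ with ⟨t, ht⟩ | ⟨t, ht⟩
  · by_cases htm : t ≤ m - 1
    · by_cases ht3 : t = 3
      · have := familyA (m := m) hm 2 2 (by omega) (by omega) (by omega) (by omega) (by omega)
        rwa [show 2*2+2 = ℓ by omega] at this
      · have := familyA (m := m) hm 1 (t-1) (by omega) (by omega) (by omega) (by omega) (by omega)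
        rwa [show 2*(t-1)+2 = ℓ by omega] at this
    · have := familyD (m := m) hm
      rwa [show 2*m = ℓ by omega] at this
  · by_cases ht2 : t = 2
    · have := family5 (m := m) hm
      rwa [show (5:ℕ) = ℓ by omega] at this
    · by_cases htm : t = m - 1
      · have := familyC (m := m) hm
        rwa [show 2*m - 1 = ℓ by omega] at this
      · have := familyB (m := m) hm (t+1) (by omega) (by omega)
        rwa [show 2*(t+1) - 1 = ℓ by omega] at this
end

section
/- Every ladder-like graph on 2m vertices with m ≥ 6 is 3-connected and 4-pancyclic. -/
open SimpleGraph

open Fin.NatCast Fin.CommRing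

section Helpers
variable {m : ℕ} [NeZero m]

lemma ll_cast_val (a : ℕ) : ((a : Fin m) : ℕ) = a % m := Fin.val_natCast a m

lemma ll_cast_inj {a b : ℕ} (ha : a < m) (hb : b < m) (h : (a : Fin m) = (b : Fin m)) :
    a = b := by
  have := congrArg Fin.val h
  rwa [ll_cast_val, ll_cast_val, Nat.mod_eq_of_lt ha, Nat.mod_eq_of_lt hb] at this

lemma ll_cast_ne_zero {a : ℕ} (h : a % m ≠ 0) : (a : Fin m) ≠ 0 := by
  intro he
  have := congrArg Fin.val he
  rw [ll_cast_val] at this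
  simp at this
  exact h this

lemma ll_one_ne_zero (hm : 2 ≤ m) : (1 : Fin m) ≠ 0 := by
  have : ((1:ℕ) : Fin m) ≠ 0 := ll_cast_ne_zero (by rw [Nat.mod_eq_of_lt (by omega)]; omega)
  simpa using this

lemma ll_two_ne_zero (hm : 6 ≤ m) : (2 : Fin m) ≠ 0 := by
  have : ((2:ℕ) : Fin m) ≠ 0 := ll_cast_ne_zero (by rw [Nat.mod_eq_of_lt (by omega)]; omega)
  simpa using this

lemma ll_succ_ne_self (hm : 2 ≤ m) (i : Fin m) : i + 1 ≠ i := by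
  intro h
  have h2 : (1 : Fin m) = 0 := by
    have := congrArg (fun x => x - i) h
    simpa [add_comm, add_sub_cancel_right] using this
  exact ll_one_ne_zero hm h2

lemma ll_pred_ne_self (hm : 2 ≤ m) (i : Fin m) : i - 1 ≠ i := by
  intro h
  rw [sub_eq_self] at h
  exact ll_one_ne_zero hm h

lemma ll_adj_step (hm : 2 ≤ m) (s : Bool) (i : Fin m) :
    (ladderLike m).Adj (s, i) (s, i + 1) :=
  Or.inl ⟨rfl, fun h => ll_succ_ne_self hm i h.symm, Or.inl rfl⟩

lemma ll_adj_match (s t : Bool) (h : s ≠ t) (i : Fin m) :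
    (ladderLike m).Adj (s, i) (t, i) :=
  Or.inr ⟨h, Or.inl rfl⟩

lemma ll_adj_extra (s t : Bool) (h : s ≠ t) :
    (ladderLike m).Adj (s, (0 : Fin m)) (t, (3 : Fin m)) :=
  Or.inr ⟨h, Or.inr (Or.inl ⟨rfl, rfl⟩)⟩

lemma ll_induce_adj {S : Set (Bool × Fin m)} {x y : Bool × Fin m} (hx : x ∈ Sᶜ) (hy : y ∈ Sᶜ)
    (h : (ladderLike m).Adj x y) :
    ((ladderLike m).induce Sᶜ).Adj ⟨x, hx⟩ ⟨y, hy⟩ := h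

lemma ll_reach_aux (hm : 6 ≤ m) (S : Set (Bool × Fin m)) (s : Bool) (b : Fin m)
    (hno : ∀ i : Fin m, i ≠ b → (s, i) ∉ S) :
    ∀ k : ℕ, k ≤ m - 2 → ∀ (h1 : (s, b + 1) ∈ Sᶜ) (h2 : (s, b + 1 + (k : Fin m)) ∈ Sᶜ),
      ((ladderLike m).induce Sᶜ).Reachable ⟨(s, b + 1), h1⟩ ⟨(s, b + 1 + (k : Fin m)), h2⟩ := by
  intro k
  induction k with
  | zero =>
    intro _ h1 h2
    simp only [Nat.cast_zero, add_zero]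
    exact Reachable.refl _
  | succ k ih =>
    intro hk h1 h2
    have hne : b + 1 + (k : Fin m) ≠ b := by
      intro h
      have h' : ((1 + k : ℕ) : Fin m) = 0 := by
        have h2 := congrArg (fun x => x - b) h
        simp only [sub_self] at h2
        push_cast
        calc (1 : Fin m) + (k : Fin m) = b + 1 + (k : Fin m) - b := by ring
        _ = 0 := h2
      exact ll_cast_ne_zero (by rw [Nat.mod_eq_of_lt (by omega)]; omega) h'
    have h2' : (s, b + 1 + (k : Fin m)) ∈ Sᶜ := fun hmem => hno _ hne hmem
    have hstep : (ladderLike m).Adj (s, b + 1 + (k : Fin m)) (s, b + 1 + ((k + 1 : ℕ) : Fin m)) := by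
      have he : b + 1 + ((k + 1 : ℕ) : Fin m) = (b + 1 + (k : Fin m)) + 1 := by
        push_cast; ring
      rw [he]
      exact ll_adj_step (by omega) s _
    exact (ih (by omega) h1 h2').trans (ll_induce_adj h2' h2 hstep).reachable

lemma ll_reach_anchor (hm : 6 ≤ m) (S : Set (Bool × Fin m)) (s : Bool) (b : Fin m)
    (hno : ∀ i : Fin m, i ≠ b → (s, i) ∉ S)
    (hsafe : (s, b) ∈ S → ¬((!s, b + 1) ∈ S ∧ (!s, b - 1) ∈ S)) :
    ∃ hanchor : (s, b + 1) ∈ Sᶜ, ∀ x (hx : x ∈ Sᶜ),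
      ((ladderLike m).induce Sᶜ).Reachable ⟨x, hx⟩ ⟨(s, b + 1), hanchor⟩ := by
  have hanchor : (s, b + 1) ∈ Sᶜ := fun hmem => hno _ (ll_succ_ne_self (by omega) b) hmem
  refine ⟨hanchor, ?_⟩
  have reach_s : ∀ (i : Fin m) (hi : (s, i) ∈ Sᶜ),
      ((ladderLike m).induce Sᶜ).Reachable ⟨(s, i), hi⟩ ⟨(s, b + 1), hanchor⟩ := by
    intro i hi
    by_cases hib : i = b
    · subst hib
      exact (ll_induce_adj hi hanchor (ll_adj_step (by omega) s i)).reachable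
    · set k : ℕ := (i - (b + 1)).val with hk
      have hkey : b + 1 + (k : Fin m) = i := by
        rw [hk, Fin.cast_val_eq_self, add_sub_cancel]
      have hklt : k ≤ m - 2 := by
        by_contra hgt
        have hklt' : k < m := (i - (b+1)).isLt
        have hkm : k = m - 1 := by omega
        apply hib
        have hv : i - (b + 1) = ((m - 1 : ℕ) : Fin m) := by
          rw [← Fin.cast_val_eq_self (i - (b+1)), ← hk, hkm]
        have h2 : i = b + 1 + ((m - 1 : ℕ) : Fin m) := by
          rw [← hv, add_sub_cancel]
        rw [h2]
        have hz : (1 : Fin m) + ((m - 1 : ℕ) : Fin m) = 0 := by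
          have h3 : ((1 + (m - 1) : ℕ) : Fin m) = 0 := by
            have h4 : 1 + (m - 1) = m := by omega
            rw [h4]
            exact Fin.ext (by rw [ll_cast_val]; simp)
          push_cast at h3
          exact h3
        rw [add_assoc, hz, add_zero]
      have h2 : (s, b + 1 + (k : Fin m)) ∈ Sᶜ := by rw [hkey]; exact hi
      have hr := (ll_reach_aux hm S s b hno k hklt hanchor h2).symm
      convert hr using 2 <;> rw [hkey]
  intro x hx
  obtain ⟨t, i⟩ := x
  by_cases hts : t = s
  · subst hts; exact reach_s i hx
  · have hts' : t ≠ s := hts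
    have hnst : (!s) = t := by cases s <;> cases t <;> simp_all
    by_cases hsi : (s, i) ∈ S
    · have hib : i = b := by
        by_contra hib
        exact hno i hib hsi
      subst hib
      obtain hc | hc := not_and_or.mp (hsafe hsi) <;> rw [hnst] at hc
      · have hadj : (ladderLike m).Adj (t, i) (t, i + 1) := ll_adj_step (by omega) t i
        have hsc : (s, i + 1) ∉ S := hno _ (ll_succ_ne_self (by omega) i)
        have hmatch : (ladderLike m).Adj (t, i + 1) (s, i + 1) := ll_adj_match t s hts' _
        exact ((ll_induce_adj hx hc hadj).reachable.trans
          (ll_induce_adj hc hsc hmatch).reachable).trans (reach_s _ hsc)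
      · have hadj : (ladderLike m).Adj (t, i) (t, i - 1) := by
          have h5 := ((ladderLike m).adj_symm (ll_adj_step (by omega : 2 ≤ m) t (i - 1)))
          rwa [sub_add_cancel] at h5
        have hsc : (s, i - 1) ∉ S := hno _ (ll_pred_ne_self (by omega) i)
        have hmatch : (ladderLike m).Adj (t, i - 1) (s, i - 1) := ll_adj_match t s hts' _
        exact ((ll_induce_adj hx hc hadj).reachable.trans
          (ll_induce_adj hc hsc hmatch).reachable).trans (reach_s _ hsc)
    · have hmatch : (ladderLike m).Adj (t, i) (s, i) := ll_adj_match t s hts' i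
      exact (ll_induce_adj hx hsi hmatch).reachable.trans (reach_s i hsi)

lemma ll_small_subset {α : Type*} [Nonempty α] (S : Set α) (hfin : S.Finite)
    (hS : S.ncard ≤ 2) : ∃ p q : α, S ⊆ {p, q} := by
  rcases S.eq_empty_or_nonempty with rfl | ⟨p, hp⟩
  · obtain ⟨a⟩ := ‹Nonempty α›
    exact ⟨a, a, by simp⟩
  rcases (S \ {p}).eq_empty_or_nonempty with he | ⟨q, hq⟩
  · refine ⟨p, p, fun x hx => ?_⟩
    by_cases hxp : x = p
    · simp [hxp]
    · exact absurd (Set.eq_empty_iff_forall_notMem.mp he x ⟨hx, hxp⟩) (fun h => h)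
  refine ⟨p, q, fun x hx => ?_⟩
  by_contra hx'
  simp only [Set.mem_insert_iff, Set.mem_singleton_iff, not_or] at hx'
  have hsub : ({p, q, x} : Set α) ⊆ S := by
    intro y hy
    rcases hy with rfl | rfl | rfl
    · exact hp
    · exact hq.1
    · exact hx
  have h3 : ({p, q, x} : Set α).ncard = 3 := by
    rw [Set.ncard_eq_three]
    exact ⟨p, q, x, fun h => hq.2 h.symm, fun h => hx'.1 h.symm, fun h => hx'.2 h.symm, rfl⟩
  have := Set.ncard_le_ncard hsub hfin
  omega

lemma ll_connected (hm : 6 ≤ m) (S : Set (Bool × Fin m)) (hS : S.ncard < 3) :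
    ((ladderLike m).induce Sᶜ).Connected := by
  obtain ⟨p, q, hsub⟩ := ll_small_subset S (Set.toFinite S) (by omega)
  have hsub' : ∀ x ∈ S, x = p ∨ x = q := fun x hx => by simpa using hsub hx
  have key : ∃ (s : Bool) (b : Fin m), (∀ i : Fin m, i ≠ b → (s, i) ∉ S) ∧
      ((s, b) ∈ S → ¬((!s, b + 1) ∈ S ∧ (!s, b - 1) ∈ S)) := by
    by_cases hpq : p.1 = q.1
    · refine ⟨!p.1, 0, fun i _ hiS => ?_, fun hb => ?_⟩
      · rcases hsub' _ hiS with h | h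
        · exact Bool.not_ne_self p.1 (congrArg Prod.fst h)
        · have h2 := congrArg Prod.fst h
          rw [← hpq] at h2
          exact Bool.not_ne_self p.1 h2
      · exfalso
        rcases hsub' _ hb with h | h
        · exact Bool.not_ne_self p.1 (congrArg Prod.fst h)
        · have h2 := congrArg Prod.fst h
          rw [← hpq] at h2
          exact Bool.not_ne_self p.1 h2
    · refine ⟨p.1, p.2, fun i hi hiS => ?_, fun _ hand => ?_⟩
      · rcases hsub' _ hiS with h | h
        · exact hi (congrArg Prod.snd h)
        · exact hpq (by rw [← congrArg Prod.fst h])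
      · obtain ⟨h1, h2⟩ := hand
        have e1 : ((!p.1, p.2 + 1) : Bool × Fin m) = q := by
          rcases hsub' _ h1 with h | h
          · exact absurd (congrArg Prod.fst h) (by simp)
          · exact h
        have e2 : ((!p.1, p.2 - 1) : Bool × Fin m) = q := by
          rcases hsub' _ h2 with h | h
          · exact absurd (congrArg Prod.fst h) (by simp)
          · exact h
        have e3 : p.2 + 1 = p.2 - 1 := by
          have := e1.trans e2.symm
          exact congrArg Prod.snd this
        have e4 : (2 : Fin m) = 0 := by
          have := congrArg (fun x => x - (p.2 - 1)) e3
          simp only [sub_self] at this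
          calc (2 : Fin m) = p.2 + 1 - (p.2 - 1) := by ring
          _ = 0 := this
        exact ll_two_ne_zero hm e4
  obtain ⟨s, b, hno, hsafe⟩ := key
  obtain ⟨hanchor, hreach⟩ := ll_reach_anchor hm S s b hno hsafe
  rw [connected_iff]
  refine ⟨fun x y => ?_, ⟨⟨_, hanchor⟩⟩⟩
  exact (hreach x.1 x.2).trans (hreach y.1 y.2).symm

end Helpers

lemma exists_path_of_fn {V : Type*} (G : SimpleGraph V) (f : ℕ → V) :
    ∀ n : ℕ, (∀ i, i + 1 ≤ n → G.Adj (f i) (f (i+1))) →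
      ∃ p : G.Walk (f 0) (f n), p.length = n ∧
        p.support = (List.range (n+1)).map f ∧
        p.edges = (List.range n).map (fun i => s(f i, f (i+1))) := by
  intro n
  induction n with
  | zero => exact fun _ => ⟨Walk.nil, by simp [List.range_succ]⟩
  | succ n ih =>
    intro h
    obtain ⟨p, hl, hs, he⟩ := ih (fun i hi => h i (by omega))
    refine ⟨p.concat (h n (by omega)), ?_, ?_, ?_⟩
    · simp [Walk.length_concat, hl]
    · rw [Walk.support_concat, hs]
      simp [List.range_succ, List.concat_eq_append]
    · rw [Walk.edges_concat, he, List.range_succ]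
      simp [List.concat_eq_append]

lemma hasCycle_of_fn_s5 {V : Type*} (G : SimpleGraph V) (n : ℕ) (hn : 3 ≤ n) (f : ℕ → V)
    (hinj : ∀ i < n, ∀ j < n, f i = f j → i = j)
    (hadj : ∀ i, i + 1 < n → G.Adj (f i) (f (i+1)))
    (hlast : G.Adj (f (n-1)) (f 0)) :
    ∃ (v : V) (c : G.Walk v v), c.IsCycle ∧ c.length = n := by
  obtain ⟨p, hl, hs, he⟩ := exists_path_of_fn G f (n-1) (fun i hi => hadj i (by omega))
  have hedge : s(f 0, f (n-1)) ∉ p.edges := by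
    rw [he]
    intro hmem
    simp only [List.mem_map, List.mem_range] at hmem
    obtain ⟨i, hi, hsym⟩ := hmem
    rw [Sym2.eq_iff] at hsym
    rcases hsym with ⟨h1, h2⟩ | ⟨h1, h2⟩
    · have hi0 : i = 0 := hinj i (by omega) 0 (by omega) h1
      have : i + 1 = n - 1 := hinj (i+1) (by omega) (n-1) (by omega) h2
      omega
    · have : i = n - 1 := hinj i (by omega) (n-1) (by omega) h1
      have : i + 1 = 0 := hinj (i+1) (by omega) 0 (by omega) h2
      omega
  refine ⟨f 0, Walk.cons hlast.symm p.reverse, ?_, ?_⟩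
  · rw [Walk.cons_isCycle_iff]
    constructor
    · apply Walk.IsPath.mk'
      rw [Walk.support_reverse, hs]
      rw [List.nodup_reverse]
      refine List.Nodup.map_on ?_ List.nodup_range
      intro x hx y hy hxy
      rw [List.mem_range] at hx hy
      exact hinj x (by omega) y (by omega) hxy
    · rw [Walk.edges_reverse, List.mem_reverse]
      exact hedge
  · simp [Walk.length_reverse, hl]; omega

section Pancyclic
variable {m : ℕ} [NeZero m]

lemma ll_adj_step_nat (hm : 2 ≤ m) (s : Bool) (a : ℕ) :
    (ladderLike m).Adj (s, (a : Fin m)) (s, ((a + 1 : ℕ) : Fin m)) := by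
  have he : ((a + 1 : ℕ) : Fin m) = (a : Fin m) + 1 := by push_cast; ring
  rw [he]
  exact ll_adj_step hm s _

lemma ll_even_cycle (hm : 6 ≤ m) (k : ℕ) (hk2 : 2 ≤ k) (hkm : k ≤ m) :
    ∃ (v : Bool × Fin m) (c : (ladderLike m).Walk v v), c.IsCycle ∧ c.length = 2 * k := by
  apply hasCycle_of_fn_s5 (ladderLike m) (2*k) (by omega)
    (fun i => if i < k then ((false : Bool), (i : Fin m)) else (true, ((2*k-1-i : ℕ) : Fin m)))
  · intro i hi j hj h
    split_ifs at h with h1 h2 h2 <;> rw [Prod.mk.injEq] at h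
    · exact ll_cast_inj (by omega) (by omega) h.2
    · exact absurd h.1 (by simp)
    · exact absurd h.1 (by simp)
    · have := ll_cast_inj (show 2*k-1-i < m by omega) (show 2*k-1-j < m by omega) h.2
      omega
  · intro i hi
    by_cases h1 : i + 1 < k
    · rw [if_pos (by omega : i < k), if_pos h1]
      exact ll_adj_step_nat (by omega) false i
    · by_cases h2 : i < k
      · rw [if_pos h2, if_neg h1]
        have he : 2*k-1-(i+1) = i := by omega
        rw [he]
        exact ll_adj_match false true (by simp) _
      · rw [if_neg h2, if_neg h1]
        have he : 2*k-1-i = (2*k-1-(i+1)) + 1 := by omega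
        rw [he]
        exact ((ladderLike m).adj_symm (ll_adj_step_nat (by omega) true (2*k-1-(i+1))))
  · rw [if_neg (by omega : ¬ (2*k-1 < k)), if_pos (by omega : 0 < k)]
    have he : 2*k-1-(2*k-1) = 0 := by omega
    rw [he]
    exact ll_adj_match true false (by simp) _

lemma ll_odd_cycle (hm : 6 ≤ m) (k : ℕ) (hk2 : 4 ≤ k) (hkm : k ≤ m) :
    ∃ (v : Bool × Fin m) (c : (ladderLike m).Walk v v), c.IsCycle ∧ c.length = 2 * k - 3 := by
  apply hasCycle_of_fn_s5 (ladderLike m) (2*k-3) (by omega)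
    (fun i => if i = 0 then ((false : Bool), ((0:ℕ) : Fin m))
      else if i ≤ k - 3 then (true, ((i + 2 : ℕ) : Fin m))
      else ((false : Bool), ((2*k-3-i : ℕ) : Fin m)))
  · intro i hi j hj h
    split_ifs at h with ha hb hc hc hd he he <;> rw [Prod.mk.injEq] at h
    · omega
    · exact absurd h.1 (by simp)
    · have := ll_cast_inj (show (0:ℕ) < m by omega) (show 2*k-3-j < m by omega) h.2
      omega
    · exact absurd h.1 (by simp)
    · have := ll_cast_inj (show i+2 < m by omega) (show j+2 < m by omega) h.2
      omega
    · exact absurd h.1 (by simp)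
    · have := ll_cast_inj (show 2*k-3-i < m by omega) (show (0:ℕ) < m by omega) h.2
      omega
    · exact absurd h.1 (by simp)
    · have := ll_cast_inj (show 2*k-3-i < m by omega) (show 2*k-3-j < m by omega) h.2
      omega
  · intro i hi
    by_cases h0 : i = 0
    · subst h0
      rw [if_pos rfl, if_neg (by omega : ¬ (0+1 = 0)), if_pos (by omega : 0+1 ≤ k-3)]
      have he0 : ((0:ℕ) : Fin m) = (0 : Fin m) := by norm_num
      have he3 : ((0+1+2 : ℕ) : Fin m) = (3 : Fin m) := by norm_num
      rw [he0, he3]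
      exact ll_adj_extra false true (by simp)
    · rw [if_neg h0, if_neg (by omega : ¬ (i+1 = 0))]
      by_cases h1 : i + 1 ≤ k - 3
      · rw [if_pos (by omega : i ≤ k-3), if_pos h1]
        have he : i+1+2 = (i+2)+1 := by omega
        rw [he]
        exact ll_adj_step_nat (by omega) true _
      · by_cases h2 : i ≤ k - 3
        · rw [if_pos h2, if_neg h1]
          have hik : i = k - 3 := by omega
          have he : 2*k-3-(i+1) = i + 2 := by omega
          rw [he]
          exact ll_adj_match true false (by simp) _
        · rw [if_neg h2, if_neg h1]
          have he : 2*k-3-i = (2*k-3-(i+1)) + 1 := by omega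
          rw [he]
          exact ((ladderLike m).adj_symm (ll_adj_step_nat (by omega) false (2*k-3-(i+1))))
  · rw [if_neg (by omega : ¬ (2*k-3-1 = 0)), if_neg (by omega : ¬ (2*k-3-1 ≤ k-3)), if_pos rfl]
    have he : 2*k-3-(2*k-3-1) = 0 + 1 := by omega
    rw [he]
    exact ((ladderLike m).adj_symm (ll_adj_step_nat (by omega) false 0))

lemma ll_long_odd_cycle (hm : 6 ≤ m) :
    ∃ (v : Bool × Fin m) (c : (ladderLike m).Walk v v), c.IsCycle ∧ c.length = 2 * m - 1 := by
  have hmod : ∀ x : ℕ, 1 ≤ x → x ≤ m - 1 →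
      ((x+2) % m = x+2 ∧ x+2 < m) ∨ ((x+2) % m = x+2-m ∧ m ≤ x+2) := by
    intro x hx1 hx2
    rcases lt_or_ge (x+2) m with h | h
    · exact Or.inl ⟨Nat.mod_eq_of_lt h, h⟩
    · refine Or.inr ⟨?_, h⟩
      rw [Nat.mod_eq_sub_mod h, Nat.mod_eq_of_lt (by omega)]
  apply hasCycle_of_fn_s5 (ladderLike m) (2*m-1) (by omega)
    (fun i => if i = 0 then ((false : Bool), ((0:ℕ) : Fin m))
      else if i ≤ m - 1 then (true, ((i + 2 : ℕ) : Fin m))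
      else ((false : Bool), ((i - m + 1 : ℕ) : Fin m)))
  · intro i hi j hj h
    split_ifs at h with ha hb hc hc hd he he <;> rw [Prod.mk.injEq] at h
    · omega
    · exact absurd h.1 (by simp)
    · have := ll_cast_inj (show (0:ℕ) < m by omega) (show j-m+1 < m by omega) h.2
      omega
    · exact absurd h.1 (by simp)
    · have hv := congrArg Fin.val h.2
      rw [ll_cast_val, ll_cast_val] at hv
      rcases hmod i (by omega) (by omega) with ⟨hi', _⟩ | ⟨hi', _⟩ <;>
        rcases hmod j (by omega) (by omega) with ⟨hj', _⟩ | ⟨hj', _⟩ <;>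
        rw [hi', hj'] at hv <;> omega
    · exact absurd h.1 (by simp)
    · have := ll_cast_inj (show i-m+1 < m by omega) (show (0:ℕ) < m by omega) h.2
      omega
    · exact absurd h.1 (by simp)
    · have := ll_cast_inj (show i-m+1 < m by omega) (show j-m+1 < m by omega) h.2
      omega
  · intro i hi
    by_cases h0 : i = 0
    · subst h0
      rw [if_pos rfl, if_neg (by omega : ¬ (0+1 = 0)), if_pos (by omega : 0+1 ≤ m-1)]
      have he0 : ((0:ℕ) : Fin m) = (0 : Fin m) := by norm_num
      have he3 : ((0+1+2 : ℕ) : Fin m) = (3 : Fin m) := by norm_num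
      rw [he0, he3]
      exact ll_adj_extra false true (by simp)
    · rw [if_neg h0, if_neg (by omega : ¬ (i+1 = 0))]
      by_cases h1 : i + 1 ≤ m - 1
      · rw [if_pos (by omega : i ≤ m-1), if_pos h1]
        have he : i+1+2 = (i+2)+1 := by omega
        rw [he]
        exact ll_adj_step_nat (by omega) true _
      · by_cases h2 : i ≤ m - 1
        · rw [if_pos h2, if_neg h1]
          have him : i = m - 1 := by omega
          have he : ((i+2 : ℕ) : Fin m) = ((i+1-m+1 : ℕ) : Fin m) := by
            apply Fin.ext
            rw [ll_cast_val, ll_cast_val]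
            have h3 : i + 2 = m + 1 := by omega
            have h4 : i+1-m+1 = 1 := by omega
            rw [h3, h4, Nat.add_mod_left]
          rw [he]
          exact ll_adj_match true false (by simp) _
        · rw [if_neg h2, if_neg h1]
          have he : i+1-m+1 = (i-m+1) + 1 := by omega
          rw [he]
          exact ll_adj_step_nat (by omega) false _
  · rw [if_neg (by omega : ¬ (2*m-1-1 = 0)), if_neg (by omega : ¬ (2*m-1-1 ≤ m-1)), if_pos rfl]
    have he : 2*m-1-1-m+1 = m-1 := by omega
    rw [he]
    have he2 : ((0:ℕ) : Fin m) = (((m-1) + 1 : ℕ) : Fin m) := by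
      apply Fin.ext
      rw [ll_cast_val, ll_cast_val]
      have h3 : m - 1 + 1 = m := by omega
      rw [h3, Nat.mod_self, Nat.zero_mod]
    rw [he2]
    exact ll_adj_step_nat (by omega) false _

end Pancyclic

theorem ladderLike_threeConnected_pancyclic' (m : ℕ) [NeZero m] (hm : 6 ≤ m) :
    (3 < Nat.card (Bool × Fin m) ∧ ∀ S : Set (Bool × Fin m), S.ncard < 3 →
        ((ladderLike m).induce (Sᶜ : Set (Bool × Fin m))).Connected) ∧
      ∀ ℓ : ℕ, 4 ≤ ℓ → ℓ ≤ 2 * m →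
        ∃ (v : Bool × Fin m) (c : (ladderLike m).Walk v v), c.IsCycle ∧ c.length = ℓ := by
  refine ⟨⟨?_, fun S hS => ll_connected hm S hS⟩, ?_⟩
  · rw [Nat.card_eq_fintype_card, Fintype.card_prod, Fintype.card_bool, Fintype.card_fin]
    omega
  · intro ℓ h4 h2m
    rcases Nat.even_or_odd ℓ with ⟨k, hk⟩ | ⟨k, hk⟩
    · obtain ⟨v, c, hc, hl⟩ := ll_even_cycle (m := m) hm k (by omega) (by omega)
      exact ⟨v, c, hc, hl.trans (by omega)⟩
    · by_cases hsmall : ℓ ≤ 2*m - 3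
      · obtain ⟨v, c, hc, hl⟩ := ll_odd_cycle (m := m) hm (k+2) (by omega) (by omega)
        exact ⟨v, c, hc, hl.trans (by omega)⟩
      · obtain ⟨v, c, hc, hl⟩ := ll_long_odd_cycle (m := m) hm
        exact ⟨v, c, hc, hl.trans (by omega)⟩

theorem ladderLike_threeConnected_pancyclic (m : ℕ) [NeZero m] (hm : 6 ≤ m) :
    IsKConnected (ladderLike m) 3 ∧
      ∀ ℓ : ℕ, 4 ≤ ℓ → ℓ ≤ 2 * m → HasCycleOfLength (ladderLike m) ℓ := by
  exact ladderLike_threeConnected_pancyclic' m hm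
end

section
/- For n ≥ 4, the augmented cube AQ_n contains a spanning subgraph isomorphic to a ladder-like graph on 2^n vertices. -/
open SimpleGraph

/-- The `n`-dimensional augmented cube: vertices are binary strings of length `n`;
two strings are adjacent iff (unwinding the recursive definition) they agree on
a prefix, and then either differ in exactly one coordinate or are bitwise
complementary on the whole remaining suffix. -/
def AQ (n : ℕ) : SimpleGraph (Fin n → Bool) where
  Adj x y := ∃ i : Fin n, (∀ j, j < i → x j = y j) ∧
    ((x i ≠ y i ∧ ∀ j, i < j → x j = y j) ∨ (∀ j, i ≤ j → x j ≠ y j))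
  symm := by
    constructor
    rintro x y ⟨i, h1, h2⟩
    refine ⟨i, fun j hj => (h1 j hj).symm, ?_⟩
    rcases h2 with ⟨ha, hb⟩ | h
    · exact Or.inl ⟨Ne.symm ha, fun j hj => (hb j hj).symm⟩
    · exact Or.inr fun j hj => Ne.symm (h j hj)
  loopless := by
    constructor
    rintro x ⟨i, -, ⟨ha, -⟩ | h⟩
    · exact ha rfl
    · exact h i le_rfl rfl

instance AQ.instDecidableAdj (n : ℕ) : DecidableRel (AQ n).Adj := fun x y =>
  decidable_of_iff (∃ i : Fin n, (∀ j, j < i → x j = y j) ∧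
    ((x i ≠ y i ∧ ∀ j, i < j → x j = y j) ∨ (∀ j, i ≤ j → x j ≠ y j))) Iff.rfl

def cmpl {k : ℕ} (u : Fin k → Bool) : Fin k → Bool := fun j => ! u j

lemma cmpl_cmpl {k : ℕ} (u : Fin k → Bool) : cmpl (cmpl u) = u := by
  funext j; simp [cmpl]

lemma cmpl_inj {k : ℕ} {u v : Fin k → Bool} (h : cmpl u = cmpl v) : u = v := by
  rw [← cmpl_cmpl u, h, cmpl_cmpl]

lemma cons_inj {k : ℕ} {a b : Bool} {u v : Fin k → Bool}
    (h : (Fin.cons a u : Fin (k+1) → Bool) = Fin.cons b v) : a = b ∧ u = v := by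
  constructor
  · simpa using congrFun h 0
  · funext j
    have := congrFun h j.succ
    rwa [Fin.cons_succ, Fin.cons_succ] at this

lemma AQ_cons_adj {k : ℕ} {u v : Fin k → Bool} (b : Bool) (h : (AQ k).Adj u v) :
    (AQ (k+1)).Adj (Fin.cons b u) (Fin.cons b v) := by
  obtain ⟨i, h1, h2⟩ := h
  refine ⟨i.succ, ?_, ?_⟩
  · intro j hj
    cases j using Fin.cases with
    | zero => simp
    | succ j' => simpa using h1 j' (Fin.succ_lt_succ_iff.mp hj)
  · rcases h2 with ⟨hne, haft⟩ | hall
    · refine Or.inl ⟨by simpa using hne, ?_⟩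
      intro j hj
      cases j using Fin.cases with
      | zero => exact absurd hj (by simp)
      | succ j' => simpa using haft j' (Fin.succ_lt_succ_iff.mp hj)
    · refine Or.inr ?_
      intro j hj
      cases j using Fin.cases with
      | zero => exact absurd hj (by simp [Fin.le_zero_iff, Fin.succ_ne_zero])
      | succ j' => simpa using hall j' (Fin.succ_le_succ_iff.mp hj)

lemma AQ_cons_cross {k : ℕ} (u : Fin k → Bool) :
    (AQ (k+1)).Adj (Fin.cons false u) (Fin.cons true u) := by
  refine ⟨0, fun j hj => absurd hj (Fin.not_lt_zero j), Or.inl ⟨by simp, ?_⟩⟩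
  intro j hj
  cases j using Fin.cases with
  | zero => exact absurd hj (lt_irrefl _)
  | succ j' => simp

lemma AQ_cons_cross_cmpl {k : ℕ} (u : Fin k → Bool) :
    (AQ (k+1)).Adj (Fin.cons false u) (Fin.cons true (cmpl u)) := by
  refine ⟨0, fun j hj => absurd hj (Fin.not_lt_zero j), Or.inr ?_⟩
  intro j _
  cases j using Fin.cases with
  | zero => simp
  | succ j' => simp [cmpl]

lemma AQ_cmpl {k : ℕ} {u v : Fin k → Bool} (h : (AQ k).Adj u v) :
    (AQ k).Adj (cmpl u) (cmpl v) := by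
  obtain ⟨i, h1, h2⟩ := h
  refine ⟨i, fun j hj => by simp [cmpl, h1 j hj], ?_⟩
  rcases h2 with ⟨hne, haft⟩ | hall
  · refine Or.inl ⟨?_, fun j hj => by simp [cmpl, haft j hj]⟩
    simp only [cmpl, ne_eq, Bool.not_inj_iff] at hne ⊢
    exact hne
  · refine Or.inr fun j hj => ?_
    simp only [cmpl, ne_eq, Bool.not_inj_iff]
    exact hall j hj

lemma cons_true_cmpl {k : ℕ} (u : Fin k → Bool) :
    Fin.cons true (cmpl u) = cmpl (Fin.cons false u) := by
  funext j
  cases j using Fin.cases with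
  | zero => simp [cmpl]
  | succ j' => simp [cmpl]

def baseVec : Fin 8 → Fin 3 → Bool :=
  ![![false,false,false], ![true,false,false], ![true,true,false], ![true,true,true],
    ![true,false,true], ![false,false,true], ![false,true,true], ![false,true,false]]

def xbase : ℕ → Fin 3 → Bool := fun i => baseVec ⟨i % 8, Nat.mod_lt i (by norm_num)⟩

lemma xbase_inj : ∀ i < 2^3, ∀ j < 2^3, xbase i = xbase j → i = j := by decide

lemma xbase_adj : ∀ i < 2^3, (AQ 3).Adj (xbase i) (xbase ((i+1) % 2^3)) := by decide

lemma xbase_anti : xbase 3 = cmpl (xbase 0) := by decide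

lemma ham : ∀ k, 3 ≤ k → ∃ x : ℕ → (Fin k → Bool),
    (∀ i < 2^k, ∀ j < 2^k, x i = x j → i = j) ∧
    (∀ i < 2^k, (AQ k).Adj (x i) (x ((i+1) % 2^k))) ∧
    x 3 = cmpl (x 0) := by
  intro k hk
  induction k, hk using Nat.le_induction with
  | base => exact ⟨xbase, xbase_inj, xbase_adj, xbase_anti⟩
  | succ k hk ih =>
    obtain ⟨x, hinj, hadj, hanti⟩ := ih
    set M := 2^k with hMdef
    have hM : 8 ≤ M := by
      calc (8:ℕ) = 2^3 := by norm_num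
      _ ≤ 2^k := Nat.pow_le_pow_right (by norm_num) hk
    have hM2 : 2^(k+1) = 2*M := by rw [hMdef, pow_succ]; ring
    have hinj2 : ∀ a b, x a = x b → a < M → b < M → a = b :=
      fun a b hab ha hb => hinj a ha b hb hab
    have gval : ∀ a, 2 ≤ a → a < M + 2 →
        (M + 3 - a) % M = if a ≤ 3 then 3 - a else M + 3 - a := by
      intro a h2 hlt
      split
      · next h3 =>
        have h4 : M + 3 - a = M + (3 - a) := by omega
        rw [h4, Nat.add_mod_left, Nat.mod_eq_of_lt (by omega)]
      · next h3 =>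
        exact Nat.mod_eq_of_lt (by omega)
    set y : ℕ → Fin (k+1) → Bool := fun i =>
      if i = 0 then Fin.cons false (x 0)
      else if i = 1 then Fin.cons false (x 1)
      else if i < M + 2 then Fin.cons true (cmpl (x ((M + 3 - i) % M)))
      else Fin.cons false (x (i - M)) with hy
    have y0 : y 0 = Fin.cons false (x 0) := by simp [hy]
    have y1 : y 1 = Fin.cons false (x 1) := by simp [hy]
    have ytrue : ∀ i, 2 ≤ i → i < M + 2 →
        y i = Fin.cons true (cmpl (x ((M + 3 - i) % M))) := by
      intro i h2 h3
      simp only [hy]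
      rw [if_neg (by omega), if_neg (by omega), if_pos h3]
    have ylate : ∀ i, M + 2 ≤ i → y i = Fin.cons false (x (i - M)) := by
      intro i h2
      simp only [hy]
      rw [if_neg (by omega), if_neg (by omega), if_neg (by omega)]
    refine ⟨y, ?_, ?_, ?_⟩
    · -- injectivity
      intro i hi j hj h
      rw [hM2] at hi hj
      simp only [hy] at h
      split_ifs at h
      all_goals try omega
      all_goals try exact Bool.noConfusion (cons_inj h).1
      all_goals obtain ⟨-, he⟩ := cons_inj h
      all_goals try (have h9 := hinj2 _ _ he (by omega) (by omega); omega)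
      all_goals
        (have h9 := hinj2 _ _ (cmpl_inj he) (Nat.mod_lt _ (by omega)) (Nat.mod_lt _ (by omega))
         rw [gval i (by omega) (by omega), gval j (by omega) (by omega)] at h9
         split_ifs at h9 <;> omega)
    · -- adjacency
      intro i hi
      rw [hM2] at hi ⊢
      by_cases h0 : i = 0
      · subst h0
        rw [Nat.mod_eq_of_lt (by omega), y0, y1]
        have hx := hadj 0 (by omega)
        rw [Nat.mod_eq_of_lt (by omega)] at hx
        exact AQ_cons_adj false hx
      by_cases h1 : i = 1
      · subst h1
        rw [Nat.mod_eq_of_lt (by omega), y1, ytrue 2 (by omega) (by omega)]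
        rw [show M + 3 - 2 = M + 1 by omega, Nat.add_mod_left, Nat.mod_eq_of_lt (by omega)]
        exact AQ_cons_cross_cmpl (x 1)
      by_cases hmid : i ≤ M
      · -- 2 ≤ i ≤ M : within the true half
        rw [Nat.mod_eq_of_lt (by omega), ytrue i (by omega) (by omega),
          ytrue (i+1) (by omega) (by omega)]
        rw [show M + 3 - (i+1) = M + 2 - i by omega]
        have e2 : ((M + 2 - i) % M + 1) % M = (M + 3 - i) % M := by
          conv_lhs => rw [show (1:ℕ) = 1 % M from (Nat.mod_eq_of_lt (by omega)).symm]
          rw [← Nat.add_mod]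
          congr 1
          omega
        have hx := hadj ((M + 2 - i) % M) (Nat.mod_lt _ (by omega))
        rw [e2] at hx
        exact (AQ_cons_adj true (AQ_cmpl hx)).symm
      by_cases hM1 : i = M + 1
      · subst hM1
        rw [Nat.mod_eq_of_lt (by omega), ytrue (M+1) (by omega) (by omega),
          ylate (M+2) (by omega)]
        rw [show M + 3 - (M+1) = 2 by omega, Nat.mod_eq_of_lt (by omega),
          show M + 2 - M = 2 by omega]
        exact (AQ_cons_cross_cmpl (x 2)).symm
      by_cases hend : i = 2*M - 1
      · subst hend
        rw [show (2*M - 1 + 1) % (2*M) = 0 by rw [show 2*M-1+1 = 2*M by omega, Nat.mod_self],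
          y0, ylate (2*M-1) (by omega)]
        have hx := hadj (M-1) (by omega)
        rw [show (M-1+1) % M = 0 by rw [show M-1+1 = M by omega, Nat.mod_self]] at hx
        rw [show 2*M - 1 - M = M - 1 by omega]
        exact AQ_cons_adj false hx
      · -- M+2 ≤ i ≤ 2M-2
        rw [Nat.mod_eq_of_lt (by omega), ylate i (by omega), ylate (i+1) (by omega)]
        have hx := hadj (i - M) (by omega)
        rw [Nat.mod_eq_of_lt (by omega), show i - M + 1 = i + 1 - M by omega] at hx
        exact AQ_cons_adj false hx
    · -- antipodal
      rw [y0, ytrue 3 (by omega) (by omega), gval 3 (by omega) (by omega)]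
      norm_num
      exact cons_true_cmpl (x 0)

theorem AQ_spanning_ladderLike (n : ℕ) (hn : 4 ≤ n) :
    ∃ H : SimpleGraph (Fin n → Bool), H ≤ AQ n ∧
      Nonempty (ladderLike (2 ^ (n - 1)) ≃g H) := by
  obtain ⟨k, rfl⟩ : ∃ k, n = k + 1 := ⟨n - 1, by omega⟩
  have hk : 3 ≤ k := by omega
  obtain ⟨x, hinj, hadj, hanti⟩ := ham k hk
  have hM : 8 ≤ 2^k := by
    calc (8:ℕ) = 2^3 := by norm_num
    _ ≤ 2^k := Nat.pow_le_pow_right (by norm_num) hk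
  haveI : NeZero (2^k) := ⟨by positivity⟩
  -- value facts about Fin (2^k)
  have hval1 : ∀ i : Fin (2^k), ((i + 1 : Fin (2^k))).val = (i.val + 1) % 2^k := by
    intro i
    rw [Fin.val_add, Fin.val_one', Nat.mod_eq_of_lt (show 1 < 2^k by omega)]
  have hval0 : ((0 : Fin (2^k))).val = 0 := rfl
  have hval3 : ((3 : Fin (2^k))).val = 3 := by
    show 3 % 2^k = 3
    exact Nat.mod_eq_of_lt (by omega)
  let f : Bool × Fin (2^k) → (Fin (k+1) → Bool) := fun p => Fin.cons p.1 (x p.2.val)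
  have hinjf : Function.Injective f := by
    rintro ⟨b, i⟩ ⟨c, j⟩ h
    obtain ⟨h1, h2⟩ := cons_inj h
    exact Prod.ext h1 (Fin.ext (hinj i.val i.isLt j.val j.isLt h2))
  have hbij : Function.Bijective f := by
    rw [Fintype.bijective_iff_injective_and_card]
    refine ⟨hinjf, ?_⟩
    simp only [Fintype.card_prod, Fintype.card_bool, Fintype.card_fin, Fintype.card_fun]
    rw [pow_succ]
    ring
  let e : (Bool × Fin (2^k)) ≃ (Fin (k+1) → Bool) := Equiv.ofBijective f hbij
  have key : ∀ p q, (ladderLike (2^k)).Adj p q → (AQ (k+1)).Adj (f p) (f q) := by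
    rintro ⟨b, i⟩ ⟨c, j⟩ (⟨hbc, hij, hs⟩ | ⟨hbc, hc⟩)
    · -- cycle edges
      cases hbc
      rcases hs with hs | hs
      · subst hs
        show (AQ (k+1)).Adj (Fin.cons b (x i.val)) (Fin.cons b (x ((i+1 : Fin (2^k))).val))
        rw [hval1 i]
        exact AQ_cons_adj b (hadj i.val i.isLt)
      · subst hs
        show (AQ (k+1)).Adj (Fin.cons b (x ((j+1 : Fin (2^k))).val)) (Fin.cons b (x j.val))
        rw [hval1 j]
        exact (AQ_cons_adj b (hadj j.val j.isLt)).symm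
    · -- cross edges
      rcases hc with hc | ⟨hc1, hc2⟩ | ⟨hc1, hc2⟩
      · subst hc
        cases b <;> cases c
        · exact absurd rfl hbc
        · exact AQ_cons_cross (x i.val)
        · exact (AQ_cons_cross (x i.val)).symm
        · exact absurd rfl hbc
      · subst hc1; subst hc2
        show (AQ (k+1)).Adj (Fin.cons b (x ((0 : Fin (2^k))).val))
          (Fin.cons c (x ((3 : Fin (2^k))).val))
        rw [hval0, hval3, hanti]
        cases b <;> cases c
        · exact absurd rfl hbc
        · exact AQ_cons_cross_cmpl (x 0)
        · have h2 := AQ_cons_cross_cmpl (cmpl (x 0))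
          rw [cmpl_cmpl] at h2
          exact h2.symm
        · exact absurd rfl hbc
      · subst hc1; subst hc2
        show (AQ (k+1)).Adj (Fin.cons b (x ((3 : Fin (2^k))).val))
          (Fin.cons c (x ((0 : Fin (2^k))).val))
        rw [hval0, hval3, hanti]
        cases b <;> cases c
        · exact absurd rfl hbc
        · have h2 := AQ_cons_cross_cmpl (cmpl (x 0))
          rw [cmpl_cmpl] at h2
          exact h2
        · exact (AQ_cons_cross_cmpl (x 0)).symm
        · exact absurd rfl hbc
  refine ⟨(ladderLike (2^k)).comap ⇑e.symm, ?_, ⟨⟨e, ?_⟩⟩⟩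
  · intro a b hab
    have h2 := key _ _ hab
    rwa [show f (e.symm a) = a from e.apply_symm_apply a,
      show f (e.symm b) = b from e.apply_symm_apply b] at h2
  · intro p q
    show (ladderLike (2^k)).Adj (e.symm (e p)) (e.symm (e q)) ↔ _
    rw [e.symm_apply_apply, e.symm_apply_apply]
    exact Iff.rfl
end

section
/- Let m ≥ 6 and let L be a ladder-like graph on 2m vertices. Then L contains a cycle of length 2m − 1 (a cycle missing exactly one vertex) and a Hamiltonian cycle. -/
open SimpleGraph

namespace LadderAux

open Fin.NatCast

variable {V : Type*} {G : SimpleGraph V}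

lemma getLastD_mem : ∀ (l : List V) (d : V), l ≠ [] → l.getLastD d ∈ l
  | [a], _, _ => by simp
  | a :: b :: l, d, _ => by
      rw [List.getLastD_cons]
      exact List.mem_cons_of_mem _ (getLastD_mem (b :: l) a (by simp))

lemma getLastD_concat (l : List V) (x d : V) : (l ++ [x]).getLastD d = x := by
  induction l generalizing d with
  | nil => rfl
  | cons a l ih => rw [List.cons_append, List.getLastD_cons]; exact ih a

def walkAlong : ∀ (a c : V) (l : List V), List.Chain G.Adj a l → l.getLastD a = c → G.Walk a c
  | _, _, [], _, hc => Walk.nil.copy rfl hc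
  | a, c, b :: l, h, hc =>
      Walk.cons (List.chain_cons.mp h).1
        (walkAlong b c l (show List.Chain G.Adj b l from (List.chain_cons.mp h).2)
          (by rw [List.getLastD_cons] at hc; exact hc))

@[simp] lemma support_walkAlong : ∀ (a c : V) (l : List V) (h : List.Chain G.Adj a l)
    (hc : l.getLastD a = c), (walkAlong a c l h hc).support = a :: l
  | a, c, [], h, hc => by subst hc; rfl
  | a, c, b :: l, h, hc => by
      rw [walkAlong, Walk.support_cons, support_walkAlong]

@[simp] lemma length_walkAlong : ∀ (a c : V) (l : List V) (h : List.Chain G.Adj a l)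
    (hc : l.getLastD a = c), (walkAlong a c l h hc).length = l.length
  | a, c, [], h, hc => by subst hc; rfl
  | a, c, b :: l, h, hc => by
      rw [walkAlong, Walk.length_cons, length_walkAlong]; rfl

lemma closing_not_mem_edges : ∀ (a b : V) (l : List V) (h : List.Chain G.Adj b l)
    (hc : l.getLastD b = a), (b :: l).Nodup → 2 ≤ l.length →
    s(a, b) ∉ (walkAlong b a l h hc).edges
  | a, b, [], h, hc, hnd, hlen => by simp at hlen
  | a, b, x :: l', h, hc, hnd, hlen => by
    rw [walkAlong, Walk.edges_cons]
    intro hmem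
    rcases List.mem_cons.mp hmem with heq | hmem'
    · rw [Sym2.eq_iff] at heq
      have hal : a ∈ x :: l' := hc ▸ getLastD_mem _ _ (by simp)
      rcases heq with ⟨hab, _⟩ | ⟨hax, _⟩
      · exact (List.nodup_cons.mp hnd).1 (hab ▸ hal)
      · have hl' : l' ≠ [] := by
          rintro rfl; simp at hlen
        have ha' : a ∈ l' := by
          rw [List.getLastD_cons] at hc; exact hc ▸ getLastD_mem _ _ hl'
        exact (List.nodup_cons.mp (List.nodup_cons.mp hnd).2).1 (hax ▸ ha')
    · have hb : b ∈ (walkAlong x a l' (show List.Chain G.Adj x l' from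
          (List.chain_cons.mp (show List.IsChain G.Adj (b :: x :: l') from h)).2) _).support :=
        Walk.snd_mem_support_of_mem_edges _ hmem'
      rw [support_walkAlong] at hb
      exact (List.nodup_cons.mp hnd).1 hb

lemma isCycle_cons_walkAlong {a b : V} (hab : G.Adj a b) {l : List V}
    (h : List.Chain G.Adj b l) (hc : l.getLastD b = a)
    (hnd : (b :: l).Nodup) (hlen : 2 ≤ l.length) :
    (Walk.cons hab (walkAlong b a l h hc)).IsCycle := by
  rw [Walk.cons_isCycle_iff]
  exact ⟨Walk.IsPath.mk' (by rw [support_walkAlong]; exact hnd),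
    closing_not_mem_edges a b l h hc hnd hlen⟩

lemma map_range_succ {α : Type*} (F : ℕ → α) (k : ℕ) :
    (List.range (k+1)).map F = F 0 :: (List.range k).map (fun i => F (i+1)) := by
  rw [List.range_succ_eq_map, List.map_cons, List.map_map]; rfl

lemma chain'_mapRange_concat (F : ℕ → V) (n : ℕ) (c : V)
    (hadj : ∀ i, i + 1 < n → G.Adj (F i) (F (i+1))) (hc : n ≠ 0 → G.Adj (F (n-1)) c) :
    List.Chain' G.Adj ((List.range n).map F ++ [c]) := by
  show List.IsChain G.Adj _
  rw [List.isChain_append]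
  refine ⟨?_, by simp, ?_⟩
  · rw [List.isChain_map]
    cases n with
    | zero => simp
    | succ k => rw [List.isChain_range_succ]; exact fun i hi => hadj i (by omega)
  · cases n with
    | zero => simp
    | succ k =>
      rw [List.range_succ, List.map_append, List.map_singleton]
      simp only [List.getLast?_concat, List.head?_cons, Option.mem_some_iff]
      rintro x rfl y rfl
      simpa using hc (by omega)

lemma nodup_mapRange_concat (F : ℕ → V) (n : ℕ) (c : V)
    (hinj : ∀ i < n, ∀ j < n, F i = F j → i = j) (hcne : ∀ i < n, F i ≠ c) :
    ((List.range n).map F ++ [c]).Nodup := by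
  refine List.Nodup.append ?_ (by simp) ?_
  · exact List.Nodup.map_on
      (fun i hi j hj hf => hinj i (List.mem_range.mp hi) j (List.mem_range.mp hj) hf)
      List.nodup_range
  · intro x hx hx'
    simp only [List.mem_singleton] at hx'
    obtain ⟨i, hi, rfl⟩ := List.mem_map.mp hx
    exact hcne i (List.mem_range.mp hi) hx'



variable {m : ℕ} [NeZero m]

lemma cast_inj_of_lt {a b : ℕ} (h : (↑a : Fin m) = ↑b) (ha : a < m) (hb : b < m) : a = b := by
  have := congrArg Fin.val h
  rwa [Fin.val_natCast, Fin.val_natCast, Nat.mod_eq_of_lt ha, Nat.mod_eq_of_lt hb] at this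

lemma castne {a b : ℕ} (h1 : a < m) (h2 : b < m) (h : a ≠ b) : (↑a : Fin m) ≠ ↑b :=
  fun he => h (cast_inj_of_lt he h1 h2)

lemma castsucc (a : ℕ) : ((a + 1 : ℕ) : Fin m) = ↑a + 1 := by push_cast; ring

lemma adj_side {b : Bool} {x y : ℕ} (hx : x < m) (hy : y < m) (h : y = x + 1 ∨ x = y + 1) :
    (ladderLike m).Adj (b, ↑x) (b, ↑y) := by
  refine Or.inl ⟨rfl, castne hx hy (by omega), ?_⟩
  rcases h with rfl | rfl
  · exact Or.inl (castsucc x)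
  · exact Or.inr (castsucc y)

lemma adj_match {b b' : Bool} (h : b ≠ b') (i j : Fin m) (hij : i = j) :
    (ladderLike m).Adj (b, i) (b', j) := Or.inr ⟨h, Or.inl hij⟩

lemma adj_extra (hm : 6 ≤ m) :
    (ladderLike m).Adj (true, ((3:ℕ) : Fin m)) (false, ((0:ℕ) : Fin m)) := by
  refine Or.inr ⟨by simp, Or.inr (Or.inr ⟨?_, ?_⟩)⟩ <;> norm_num



def hamF (m : ℕ) [NeZero m] (i : ℕ) : Bool × Fin m :=
  if i = 0 then (false, ((0:ℕ) : Fin m))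
  else if i ≤ m then (true, ((i - 1 : ℕ) : Fin m))
  else (false, ((2 * m - i : ℕ) : Fin m))

def cycF (m : ℕ) [NeZero m] (i : ℕ) : Bool × Fin m :=
  if i = 0 then (false, ((0:ℕ) : Fin m))
  else if i ≤ 3 then (true, ((i - 1 : ℕ) : Fin m))
  else if i ≤ m + 1 then (false, ((i - 2 : ℕ) : Fin m))
  else (true, ((2 * m + 1 - i : ℕ) : Fin m))

variable {m : ℕ} [NeZero m]

lemma hamF_adj (hm : 6 ≤ m) (i : ℕ) (hi : i + 1 < 2 * m) :
    (ladderLike m).Adj (hamF m i) (hamF m (i + 1)) := by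
  rcases Nat.eq_zero_or_pos i with rfl | h1
  · rw [hamF, if_pos rfl, hamF, if_neg (by omega), if_pos (by omega)]
    exact adj_match (by simp) _ _ (by norm_num)
  rcases Nat.lt_or_ge i m with him | him
  · rw [hamF, if_neg (by omega), if_pos (by omega), hamF, if_neg (by omega), if_pos (by omega)]
    exact adj_side (by omega) (by omega) (by omega)
  rcases eq_or_lt_of_le him with rfl | him'
  · rw [hamF, if_neg (by omega), if_pos le_rfl, hamF, if_neg (by omega), if_neg (by omega)]
    exact adj_match (by simp) _ _ (congrArg Nat.cast (by omega))
  · rw [hamF, if_neg (by omega), if_neg (by omega), hamF, if_neg (by omega), if_neg (by omega)]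
    exact adj_side (by omega) (by omega) (by omega)

lemma hamF_inj (hm : 6 ≤ m) : ∀ i < 2 * m, ∀ j < 2 * m, hamF m i = hamF m j → i = j := by
  intro i hi j hj h
  rw [hamF, hamF] at h
  rw [Prod.mk.injEq] at h
  revert h
  split_ifs <;> rintro ⟨hb, hs⟩ <;>
    first
      | omega
      | (have h' := cast_inj_of_lt hs (by omega) (by omega); omega)
      | simp at hb

lemma cycF_adj (hm : 6 ≤ m) (i : ℕ) (hi : i + 1 < 2 * m - 1) :
    (ladderLike m).Adj (cycF m i) (cycF m (i + 1)) := by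
  rcases Nat.eq_zero_or_pos i with rfl | h1
  · rw [cycF, if_pos rfl, cycF, if_neg (by omega), if_pos (by omega)]
    exact adj_match (by simp) _ _ (by norm_num)
  rcases Nat.lt_or_ge i 3 with h3 | h3
  · rw [cycF, if_neg (by omega), if_pos (by omega), cycF, if_neg (by omega), if_pos (by omega)]
    exact adj_side (by omega) (by omega) (by omega)
  rcases eq_or_lt_of_le h3 with rfl | h4
  · rw [cycF, if_neg (by omega), if_pos (by omega),
      cycF, if_neg (by omega), if_neg (by omega), if_pos (by omega)]
    exact adj_match (by simp) _ _ (congrArg Nat.cast (by omega))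
  rcases Nat.lt_or_ge i (m + 1) with hm1 | hm1
  · rw [cycF, if_neg (by omega), if_neg (by omega), if_pos (by omega),
      cycF, if_neg (by omega), if_neg (by omega), if_pos (by omega)]
    exact adj_side (by omega) (by omega) (by omega)
  rcases eq_or_lt_of_le hm1 with rfl | hm2
  · rw [cycF, if_neg (by omega), if_neg (by omega), if_pos le_rfl,
      cycF, if_neg (by omega), if_neg (by omega), if_neg (by omega)]
    exact adj_match (by simp) _ _ (congrArg Nat.cast (by omega))
  · rw [cycF, if_neg (by omega), if_neg (by omega), if_neg (by omega),
      cycF, if_neg (by omega), if_neg (by omega), if_neg (by omega)]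
    exact adj_side (by omega) (by omega) (by omega)

lemma cycF_inj (hm : 6 ≤ m) : ∀ i < 2 * m - 1, ∀ j < 2 * m - 1, cycF m i = cycF m j → i = j := by
  intro i hi j hj h
  rw [cycF, cycF] at h
  rw [Prod.mk.injEq] at h
  revert h
  split_ifs <;> rintro ⟨hb, hs⟩ <;>
    first
      | omega
      | (have h' := cast_inj_of_lt hs (by omega) (by omega); omega)
      | simp at hb

end LadderAux

theorem ladderLike_long_cycles (m : ℕ) [NeZero m] (hm : 6 ≤ m) :
    HasCycleOfLength (ladderLike m) (2 * m - 1) ∧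
      ∃ (v : Bool × Fin m) (c : (ladderLike m).Walk v v), c.IsHamiltonianCycle := by
  open LadderAux in
  constructor
  · -- the (2m-1)-cycle
    have hab : (ladderLike m).Adj (cycF m 0) (cycF m 1) := cycF_adj hm 0 (by omega)
    set l : List (Bool × Fin m) :=
      ((List.range (2*m-3)).map (fun i => cycF m (i+2))) ++ [cycF m 0] with hl
    have hbl : cycF m 1 :: l = ((List.range (2*m-2)).map (fun i => cycF m (i+1))) ++ [cycF m 0] := by
      have h2 : 2*m-2 = (2*m-3)+1 := by omega
      rw [h2, map_range_succ, List.cons_append]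
    have hchain : List.Chain (ladderLike m).Adj (cycF m 1) l := by
      have h : List.Chain' (ladderLike m).Adj (cycF m 1 :: l) := by
        rw [hbl]
        refine chain'_mapRange_concat _ _ _ (fun i hi => cycF_adj hm (i+1) (by omega))
          (fun _ => ?_)
        have e : 2*m-2-1+1 = 2*m-2 := by omega
        rw [e, cycF, if_neg (by omega), if_neg (by omega), if_neg (by omega), cycF, if_pos rfl]
        have e3 : 2*m+1-(2*m-2) = 3 := by omega
        rw [e3]
        exact adj_extra hm
      exact h
    have hlast : l.getLastD (cycF m 1) = cycF m 0 := getLastD_concat _ _ _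
    have hnd : (cycF m 1 :: l).Nodup := by
      rw [hbl]
      refine nodup_mapRange_concat _ _ _ (fun i hi j hj hij => ?_) (fun i hi hc => ?_)
      · have := cycF_inj hm (i+1) (by omega) (j+1) (by omega) hij; omega
      · have := cycF_inj hm (i+1) (by omega) 0 (by omega) hc; omega
    have hlen : 2 ≤ l.length := by
      rw [hl]
      simp only [List.length_append, List.length_map, List.length_range, List.length_singleton]
      omega
    refine ⟨cycF m 0, Walk.cons hab (walkAlong _ _ l hchain hlast),
      isCycle_cons_walkAlong hab hchain hlast hnd hlen, ?_⟩
    rw [Walk.length_cons, length_walkAlong, hl]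
    simp only [List.length_append, List.length_map, List.length_range, List.length_singleton]
    omega
  · -- the Hamiltonian cycle
    have hab : (ladderLike m).Adj (hamF m 0) (hamF m 1) := hamF_adj hm 0 (by omega)
    set l : List (Bool × Fin m) :=
      ((List.range (2*m-2)).map (fun i => hamF m (i+2))) ++ [hamF m 0] with hl
    have hbl : hamF m 1 :: l = ((List.range (2*m-1)).map (fun i => hamF m (i+1))) ++ [hamF m 0] := by
      have h2 : 2*m-1 = (2*m-2)+1 := by omega
      rw [h2, map_range_succ, List.cons_append]
    have hchain : List.Chain (ladderLike m).Adj (hamF m 1) l := by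
      have h : List.Chain' (ladderLike m).Adj (hamF m 1 :: l) := by
        rw [hbl]
        refine chain'_mapRange_concat _ _ _ (fun i hi => hamF_adj hm (i+1) (by omega))
          (fun _ => ?_)
        have e : 2*m-1-1+1 = 2*m-1 := by omega
        rw [e, hamF, if_neg (by omega), if_neg (by omega), hamF, if_pos rfl]
        have e2 : 2*m-(2*m-1) = 1 := by omega
        rw [e2]
        exact adj_side (by omega) (by omega) (by omega)
      exact h
    have hlast : l.getLastD (hamF m 1) = hamF m 0 := getLastD_concat _ _ _
    have hnd : (hamF m 1 :: l).Nodup := by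
      rw [hbl]
      refine nodup_mapRange_concat _ _ _ (fun i hi j hj hij => ?_) (fun i hi hc => ?_)
      · have := hamF_inj hm (i+1) (by omega) (j+1) (by omega) hij; omega
      · have := hamF_inj hm (i+1) (by omega) 0 (by omega) hc; omega
    have hlen : 2 ≤ l.length := by
      rw [hl]
      simp only [List.length_append, List.length_map, List.length_range, List.length_singleton]
      omega
    refine ⟨hamF m 0, Walk.cons hab (walkAlong _ _ l hchain hlast), ?_⟩
    rw [Walk.isHamiltonianCycle_iff_isCycle_and_support_count_tail_eq_one]
    refine ⟨isCycle_cons_walkAlong hab hchain hlast hnd hlen, fun v => ?_⟩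
    have hsupp : (Walk.cons hab (walkAlong _ _ l hchain hlast)).support.tail = hamF m 1 :: l := by
      rw [Walk.support_cons, List.tail_cons, support_walkAlong]
    rw [hsupp]
    have key := List.count_eq_one_of_mem (a := v) hnd ?_
    · convert key using 2
      exact lawful_beq_subsingleton _ _
    rw [hbl]
    obtain ⟨c, j⟩ := v
    have hjlt := j.isLt
    cases c with
    | false =>
      rcases Nat.eq_zero_or_pos j.val with hj0 | hj1
      · refine List.mem_append.mpr (Or.inr ?_)
        simp only [List.mem_singleton]
        rw [hamF, if_pos rfl]
        refine Prod.ext rfl ?_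
        exact Fin.ext (by simp [hj0])
      · refine List.mem_append.mpr (Or.inl (List.mem_map.mpr
          ⟨2*m - j.val - 1, List.mem_range.mpr (by omega), ?_⟩))
        show hamF m (2*m - j.val - 1 + 1) = (false, j)
        have e : 2*m - j.val - 1 + 1 = 2*m - j.val := by omega
        rw [e, hamF, if_neg (by omega), if_neg (by omega)]
        have e2 : 2*m - (2*m - j.val) = j.val := by omega
        rw [e2, Fin.cast_val_eq_self]
    | true =>
      refine List.mem_append.mpr (Or.inl (List.mem_map.mpr
        ⟨j.val, List.mem_range.mpr (by omega), ?_⟩))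
      show hamF m (j.val + 1) = (true, j)
      rw [hamF, if_neg (by omega), if_pos (by omega)]
      have e : j.val + 1 - 1 = j.val := by omega
      rw [e, Fin.cast_val_eq_self]
end
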